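/- Let P be a finite partially ordered set, let L ⊆ P be an antichain, and let 𝒞 be a finite multiset of chains of P such that every chain C ∈ 𝒞 contains exactly one element of L. For x ∈ P write c(x) for the number of chains in 𝒞 (counted with multiplicity) that contain x. Suppose there is a positive integer γ such that c(x) = γ for every x ∈ L and c(x) ≥ γ for every x ∈ P. Then every antichain A of P satisfies |A| ≤ |L|; that is, L is a maximum antichain. -/
import Mathlib

/-- Double counting: summing over `x ∈ A` the number of chains containing `x`
equals summing over chains the size of their intersection with `A`. -/
lemma double_count {α : Type*} [DecidableEq α] (𝒞 : Multiset (Finset α)) (A : Finset α) :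
    ∑ x ∈ A, Multiset.card (𝒞.filter (fun C => x ∈ C)) =
      (𝒞.map (fun C => (C ∩ A).card)).sum := by
  induction 𝒞 using Multiset.induction with
  | empty => simp
  | cons C s ih =>
    simp only [Multiset.filter_cons, Multiset.map_cons, Multiset.sum_cons, Multiset.card_add]
    have hcard : ∀ x : α, Multiset.card (if x ∈ C then ({C} : Multiset (Finset α)) else 0)
        = if x ∈ C then 1 else 0 := by
      intro x; split <;> simp
    simp only [hcard]
    rw [Finset.sum_add_distrib, ih, Finset.sum_ite_mem]
    congr 2
    · rw [Finset.sum_const, smul_eq_mul, mul_one, Finset.inter_comm]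

theorem stmt_0 {α : Type*} [Fintype α] [PartialOrder α] [DecidableEq α]
    (L : Finset α) (hL : IsAntichain (· ≤ ·) (L : Set α))
    (𝒞 : Multiset (Finset α))
    (hchain : ∀ C ∈ 𝒞, IsChain (· ≤ ·) (C : Set α))
    (hone : ∀ C ∈ 𝒞, (C ∩ L).card = 1)
    (c : α → ℕ)
    (hc : ∀ x : α, c x = Multiset.card (𝒞.filter (fun C => x ∈ C)))
    (γ : ℕ) (hγ : 0 < γ)
    (hcL : ∀ x ∈ L, c x = γ)
    (hcall : ∀ x : α, γ ≤ c x)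
    (A : Finset α) (hA : IsAntichain (· ≤ ·) (A : Set α)) :
    A.card ≤ L.card := by
  -- |𝒞| = γ * |L|
  have hLsum : ∑ x ∈ L, c x = γ * L.card := by
    rw [Finset.sum_congr rfl hcL]; simp [mul_comm]
  have hLeq : ∑ x ∈ L, c x = Multiset.card 𝒞 := by
    have := double_count 𝒞 L
    rw [Finset.sum_congr rfl (fun x _ => hc x), this]
    have : 𝒞.map (fun C => (C ∩ L).card) = Multiset.replicate (Multiset.card 𝒞) 1 := by
      rw [Multiset.eq_replicate]
      constructor
      · simp
      · intro b hb
        obtain ⟨C, hC, rfl⟩ := Multiset.mem_map.mp hb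
        exact hone C hC
    rw [this, Multiset.sum_replicate, smul_eq_mul, mul_one]
  -- each chain meets A at most once
  have hAone : ∀ C ∈ 𝒞, (C ∩ A).card ≤ 1 := by
    intro C hC
    apply Finset.card_le_one.mpr
    intro a ha b hb
    rw [Finset.mem_inter] at ha hb
    by_contra hne
    rcases (hchain C hC) ha.1 hb.1 hne with h | h
    · exact hA ha.2 hb.2 hne h
    · exact hA hb.2 ha.2 (Ne.symm hne) h
  have hAsum : ∑ x ∈ A, c x ≤ Multiset.card 𝒞 := by
    rw [Finset.sum_congr rfl (fun x _ => hc x), double_count 𝒞 A]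
    calc (𝒞.map (fun C => (C ∩ A).card)).sum
        ≤ Multiset.card (𝒞.map (fun C => (C ∩ A).card)) • 1 := by
          apply Multiset.sum_le_card_nsmul
          intro x hx
          obtain ⟨C, hC, rfl⟩ := Multiset.mem_map.mp hx
          exact hAone C hC
      _ = Multiset.card 𝒞 := by simp
  have hγA : γ * A.card ≤ ∑ x ∈ A, c x := by
    rw [mul_comm, ← smul_eq_mul, ← Finset.sum_const]
    exact Finset.sum_le_sum fun x _ => hcall x
  have : γ * A.card ≤ γ * L.card := by
    calc γ * A.card ≤ ∑ x ∈ A, c x := hγA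
      _ ≤ Multiset.card 𝒞 := hAsum
      _ = ∑ x ∈ L, c x := hLeq.symm
      _ = γ * L.card := hLsum
  exact Nat.le_of_mul_le_mul_left this hγ
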